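/- Let q, d ≥ 2 be integers and let θ be an integer. Then the map n ↦ w_q(n) + θ·n is uniformly distributed modulo d; that is, for every integer x, the limit lim_{N→∞} (1/N)·|{n < N : w_q(n) + θ·n ≡ x (mod d)}| exists and equals 1/d. -/

import Mathlib

open Filter Complex Topology

/-- `vq q n` is the `q`-adic valuation: `0` if `n = 0`, and otherwise the
largest `k` such that `q ^ k` divides `n`. -/
noncomputable def vq (q n : ℕ) : ℕ := if n = 0 then 0 else sSup {k : ℕ | q ^ k ∣ n}

/-- `wq q n = ∑_{i=0}^n vq q i`. -/
noncomputable def wq (q n : ℕ) : ℕ := ∑ i ∈ Finset.range (n + 1), vq q i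

noncomputable def zet (d : ℕ) : ℂ := Complex.exp (2 * Real.pi * Complex.I / d)

noncomputable def Complex.abs : AbsoluteValue ℂ ℝ where
  toFun := norm
  map_mul' := norm_mul
  nonneg' := norm_nonneg
  eq_zero' := fun _ => norm_eq_zero
  add_le' := norm_add_le

lemma Complex.norm_eq_abs (z : ℂ) : ‖z‖ = Complex.abs z := rfl

lemma Complex.sq_abs (z : ℂ) : Complex.abs z ^ 2 = Complex.normSq z := Complex.sq_norm z

lemma Complex.re_le_abs (z : ℂ) : z.re ≤ Complex.abs z := Complex.re_le_norm z

lemma Complex.abs_exp (z : ℂ) : Complex.abs (Complex.exp z) = Real.exp z.re := Complex.norm_exp z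

lemma Complex.abs_natCast (n : ℕ) : Complex.abs (n : ℂ) = n := Complex.norm_natCast n

lemma zet_ne_zero {d : ℕ} (hd : 2 ≤ d) : zet d ≠ 0 := Complex.exp_ne_zero _

variable {d : ℕ}

lemma vq_zero (q : ℕ) : vq q 0 = 0 := by simp [vq]

lemma vq_bddAbove {q n : ℕ} (hq : 2 ≤ q) (hn : n ≠ 0) : BddAbove {k : ℕ | q ^ k ∣ n} := by
  refine ⟨n, fun k hk => ?_⟩
  have h1 : q ^ k ≤ n := Nat.le_of_dvd (Nat.pos_of_ne_zero hn) hk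
  have : k < 2 ^ k := Nat.lt_two_pow_self
  have h2 : (2:ℕ) ^ k ≤ q ^ k := Nat.pow_le_pow_left hq k
  omega

lemma vq_dvd {q n : ℕ} (hq : 2 ≤ q) (hn : n ≠ 0) : q ^ (vq q n) ∣ n := by
  have : sSup {k : ℕ | q ^ k ∣ n} ∈ {k : ℕ | q ^ k ∣ n} :=
    Nat.sSup_mem ⟨0, by simp⟩ (vq_bddAbove hq hn)
  simpa [vq, hn] using this

lemma vq_not_dvd {q n : ℕ} (hq : 2 ≤ q) (hn : n ≠ 0) : ¬ q ^ (vq q n + 1) ∣ n := by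
  intro h
  have : vq q n + 1 ≤ vq q n := by
    have := le_csSup (vq_bddAbove hq hn) (show vq q n + 1 ∈ {k : ℕ | q ^ k ∣ n} from h)
    simpa [vq, hn] using this
  omega

lemma vq_eq {q n k : ℕ} (hq : 2 ≤ q) (hn : n ≠ 0) (h1 : q ^ k ∣ n) (h2 : ¬ q ^ (k+1) ∣ n) :
    vq q n = k := by
  have hk : k ≤ vq q n := by
    have := le_csSup (vq_bddAbove hq hn) (show k ∈ {k : ℕ | q ^ k ∣ n} from h1)
    simpa [vq, hn] using this
  rcases Nat.lt_or_ge k (vq q n) with h | h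
  · exact absurd (dvd_trans (pow_dvd_pow q (by omega : k + 1 ≤ vq q n)) (vq_dvd hq hn)) h2
  · omega

lemma vq_of_not_dvd {q n : ℕ} (hq : 2 ≤ q) (hn : ¬ q ∣ n) : vq q n = 0 := by
  have hn0 : n ≠ 0 := by rintro rfl; exact hn (dvd_zero q)
  exact vq_eq hq hn0 (by simp) (by simpa using hn)

lemma vq_mul {q n : ℕ} (hq : 2 ≤ q) (hn : n ≠ 0) : vq q (q * n) = vq q n + 1 := by
  have hq0 : q ≠ 0 := by omega
  have hqn : q * n ≠ 0 := by positivity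
  refine vq_eq hq hqn ?_ ?_
  · rw [pow_succ, mul_comm (q ^ vq q n) q]
    exact mul_dvd_mul_left q (vq_dvd hq hn)
  · intro h
    have h' : q * q ^ (vq q n + 1) ∣ q * n := by
      have : q ^ (vq q n + 1 + 1) = q * q ^ (vq q n + 1) := by ring
      rwa [this] at h
    exact vq_not_dvd hq hn ((mul_dvd_mul_iff_left (show (q:ℕ) ≠ 0 from hq0)).mp h')

lemma wq_succ (q n : ℕ) : wq q (n + 1) = wq q n + vq q (n + 1) := Finset.sum_range_succ _ _

lemma not_dvd_mul_add {q m r : ℕ} (h0 : 0 < r) (h1 : r < q) : ¬ q ∣ q * m + r := by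
  intro h
  have : q ∣ r := (Nat.dvd_add_right ⟨m, rfl⟩).mp h
  have := Nat.le_of_dvd h0 this
  omega

lemma wq_add_small {q : ℕ} (hq : 2 ≤ q) (m : ℕ) : ∀ s, s < q → wq q (q * m + s) = wq q (q * m) := by
  intro s
  induction s with
  | zero => intro _; rfl
  | succ s ih =>
    intro hs
    have h0 : q * m + (s + 1) = (q * m + s) + 1 := by ring
    rw [h0, wq_succ, ih (by omega)]
    have h1 : q * m + s + 1 = q * m + (s + 1) := by ring
    rw [h1, vq_of_not_dvd hq (not_dvd_mul_add (by omega) hs)]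
    simp

lemma wq_mul {q : ℕ} (hq : 2 ≤ q) (m : ℕ) : wq q (q * m) = m + wq q m := by
  induction m with
  | zero => simp [wq]
  | succ m ih =>
    have h1 : q * (m + 1) = (q * m + (q - 1)) + 1 := by
      rw [Nat.mul_succ]
      omega
    rw [h1, wq_succ, wq_add_small hq m (q-1) (by omega), ← h1]
    rw [show q * (m+1) = q * (m+1) from rfl, vq_mul hq (Nat.succ_ne_zero m), ih, wq_succ]
    ring

lemma wq_block {q : ℕ} (hq : 2 ≤ q) (m s : ℕ) (hs : s < q) :
    wq q (q * m + s) = m + wq q m := by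
  rw [wq_add_small hq m s hs, wq_mul hq]

noncomputable def fI (q : ℕ) (θ : ℤ) (n : ℕ) : ℤ := (wq q n : ℤ) + θ * n

lemma fI_rec {q : ℕ} (hq : 2 ≤ q) (θ : ℤ) (m s : ℕ) (hs : s < q) :
    fI q θ (q * m + s) = fI q (1 + q * θ) m + θ * s := by
  unfold fI
  rw [wq_block hq m s hs]
  push_cast
  ring

lemma zet_prim (hd : 2 ≤ d) : IsPrimitiveRoot (zet d) d :=
  Complex.isPrimitiveRoot_exp d (by omega)


lemma zet_norm (hd : 2 ≤ d) : Complex.abs (zet d) = 1 := by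
  unfold zet
  rw [Complex.abs_exp]
  norm_num

lemma zet_zpow_norm (hd : 2 ≤ d) (z : ℤ) : Complex.abs (zet d ^ z) = 1 := by
  rw [map_zpow₀, zet_norm hd, one_zpow]

lemma zet_zpow_eq_one (hd : 2 ≤ d) (m : ℤ) : zet d ^ m = 1 ↔ (d:ℤ) ∣ m :=
  (zet_prim hd).zpow_eq_one_iff_dvd m

-- |1 + z| < 2 when |z| = 1, z ≠ 1
lemma abs_one_add_lt {z : ℂ} (hz : Complex.abs z = 1) (h1 : z ≠ 1) :
    Complex.abs (1 + z) < 2 := by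
  have e1 : (1:ℝ) = z.re^2 + z.im^2 := by
    rw [show (1:ℝ) = (Complex.abs z)^2 by rw [hz]; norm_num, Complex.sq_abs,
      Complex.normSq_apply]; ring
  have hre : z.re < 1 := by
    rcases lt_or_eq_of_le (Complex.re_le_abs z) with h | h
    · rwa [hz] at h
    · exfalso
      apply h1
      have him : z.im = 0 := by nlinarith [hz, h]
      have hre1 : z.re = 1 := by rw [h, hz]
      exact Complex.ext (by simp [hre1]) (by simp [him])
  have e2 : (Complex.abs (1+z))^2 = (1+z.re)^2 + z.im^2 := by
    rw [Complex.sq_abs, Complex.normSq_apply]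
    simp
    ring
  nlinarith [AbsoluteValue.nonneg Complex.abs (1+z)]

noncomputable def eps (d : ℕ) (hd : 2 ≤ d) : ℝ :=
  ((Finset.Ico 1 d).image (fun t => 2 - Complex.abs (1 + zet d ^ t))).min'
    (by
      apply Finset.Nonempty.image
      rw [Finset.nonempty_Ico]
      omega)

lemma eps_pos (hd : 2 ≤ d) : 0 < eps d hd := by
  rw [eps, Finset.lt_min'_iff]
  intro y hy
  rw [Finset.mem_image] at hy
  obtain ⟨t, ht, rfl⟩ := hy
  rw [Finset.mem_Ico] at ht
  have h1 : zet d ^ t ≠ 1 := (zet_prim hd).pow_ne_one_of_pos_of_lt (by omega) ht.2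
  have h2 : Complex.abs (zet d ^ t) = 1 := by
    rw [map_pow, zet_norm hd, one_pow]
  linarith [abs_one_add_lt h2 h1]

lemma eps_le_two (hd : 2 ≤ d) : eps d hd ≤ 2 := by
  have h1 : (1:ℕ) ∈ Finset.Ico 1 d := by rw [Finset.mem_Ico]; omega
  have h3 : eps d hd ≤ 2 - Complex.abs (1 + zet d ^ (1:ℕ)) := by
    rw [eps]
    exact Finset.min'_le _ _ (Finset.mem_image_of_mem _ h1)
  have := AbsoluteValue.nonneg Complex.abs (1 + zet d ^ (1:ℕ))
  linarith

lemma zet_zpow_emod (hd : 2 ≤ d) (t : ℤ) : zet d ^ t = zet d ^ (t % d) := by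
  conv_lhs => rw [← Int.emod_add_mul_ediv t d]
  rw [zpow_add₀ (zet_ne_zero hd), zpow_mul]
  have : zet d ^ (d:ℤ) = 1 := by
    rw [zpow_natCast, (zet_prim hd).pow_eq_one]
  rw [this, one_zpow, mul_one]

lemma abs_one_add_zpow_le (hd : 2 ≤ d) {t : ℤ} (ht : ¬ (d:ℤ) ∣ t) :
    Complex.abs (1 + zet d ^ t) ≤ 2 - eps d hd := by
  have hd0 : (d:ℤ) ≠ 0 := by positivity
  set t' : ℕ := (t % d).toNat with ht'
  have h0 : (0:ℤ) ≤ t % d := Int.emod_nonneg t hd0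
  have h1 : t % d < d := Int.emod_lt_of_pos t (by positivity)
  have h2 : t % d ≠ 0 := fun h => ht (Int.dvd_iff_emod_eq_zero.mpr h)
  have hmem : t' ∈ Finset.Ico 1 d := by
    rw [Finset.mem_Ico]
    omega
  have hz : zet d ^ t = zet d ^ t' := by
    rw [zet_zpow_emod hd t, ← zpow_natCast]
    congr 1
    omega
  rw [hz]
  have h3 : eps d hd ≤ 2 - Complex.abs (1 + zet d ^ t') := by
    rw [eps]
    exact Finset.min'_le _ _ (Finset.mem_image_of_mem _ hmem)
  linarith

noncomputable def Tsum (q d : ℕ) (t : ℤ) : ℂ := ∑ s ∈ Finset.range q, zet d ^ (t * s)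

lemma Tsum_le (hq : 2 ≤ q) (hd : 2 ≤ d) (t : ℤ) : Complex.abs (Tsum q d t) ≤ q := by
  refine le_trans (AbsoluteValue.sum_le _ _ _) ?_
  rw [show (q:ℝ) = ∑ s ∈ Finset.range q, (1:ℝ) by simp]
  exact Finset.sum_le_sum fun i _ => le_of_eq (zet_zpow_norm hd _)

lemma Tsum_lt {q : ℕ} (hq : 2 ≤ q) (hd : 2 ≤ d) {t : ℤ} (ht : ¬ (d:ℤ) ∣ t) :
    Complex.abs (Tsum q d t) ≤ q - eps d hd := by
  have hsplit : Finset.range q = insert 0 (insert 1 (Finset.Ico 2 q)) := by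
    ext n
    simp [Finset.mem_Ico]
    omega
  rw [Tsum, hsplit, Finset.sum_insert (by simp), Finset.sum_insert (by simp)]
  push_cast
  rw [mul_zero, mul_one, zpow_zero, ← add_assoc]
  have hrest : Complex.abs (∑ s ∈ Finset.Ico 2 q, zet d ^ (t * s)) ≤ (q:ℝ) - 2 := by
    refine le_trans (AbsoluteValue.sum_le _ _ _) ?_
    rw [show (q:ℝ) - 2 = ∑ s ∈ Finset.Ico 2 q, (1:ℝ) by
      rw [Finset.sum_const, Nat.card_Ico, nsmul_eq_mul, mul_one, Nat.cast_sub hq]; ring]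
    exact Finset.sum_le_sum fun i _ => le_of_eq (zet_zpow_norm hd _)
  calc Complex.abs (1 + zet d ^ t + ∑ s ∈ Finset.Ico 2 q, zet d ^ (t * s))
      ≤ Complex.abs (1 + zet d ^ t) + Complex.abs (∑ s ∈ Finset.Ico 2 q, zet d ^ (t * s)) :=
        AbsoluteValue.add_le _ _ _
    _ ≤ (2 - eps d hd) + ((q:ℝ) - 2) := add_le_add (abs_one_add_zpow_le hd ht) hrest
    _ = (q:ℝ) - eps d hd := by ring

lemma sum_char (hd : 2 ≤ d) (m : ℤ) :
    ∑ a ∈ Finset.range d, zet d ^ ((a:ℤ) * m) = if (d:ℤ) ∣ m then (d:ℂ) else 0 := by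
  have hterm : ∀ a : ℕ, zet d ^ ((a:ℤ) * m) = (zet d ^ m) ^ a := by
    intro a
    rw [mul_comm, zpow_mul, zpow_natCast]
  simp_rw [hterm]
  by_cases h : (d:ℤ) ∣ m
  · rw [if_pos h, (zet_zpow_eq_one hd m).mpr h]
    simp
  · rw [if_neg h]
    have hz1 : zet d ^ m ≠ 1 := fun hc => h ((zet_zpow_eq_one hd m).mp hc)
    rw [geom_sum_eq hz1]
    have : (zet d ^ m) ^ d = 1 := by
      rw [← zpow_natCast, ← zpow_mul, mul_comm, zpow_mul, zpow_natCast,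
        (zet_prim hd).pow_eq_one, one_zpow]
    rw [this]
    simp

-- block decomposition of a range sum
lemma sum_range_block (g : ℕ → ℂ) (q M r : ℕ) :
    ∑ n ∈ Finset.range (q * M + r), g n =
      (∑ m ∈ Finset.range M, ∑ s ∈ Finset.range q, g (q * m + s)) +
      ∑ s ∈ Finset.range r, g (q * M + s) := by
  rw [Finset.sum_range_add]
  congr 1
  induction M with
  | zero => simp
  | succ M ih =>
    rw [Finset.sum_range_succ, ← ih, Nat.mul_succ, Finset.sum_range_add]

noncomputable def Esum (q d : ℕ) (a θ : ℤ) (N : ℕ) : ℂ :=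
  ∑ n ∈ Finset.range N, zet d ^ (a * fI q θ n)

lemma Esum_rec {q d : ℕ} (hq : 2 ≤ q) (hd : 2 ≤ d) (a θ : ℤ) (N : ℕ) :
    Esum q d a θ N = Tsum q d (a * θ) * Esum q d a (1 + q * θ) (N / q) +
      ∑ s ∈ Finset.range (N % q), zet d ^ (a * fI q θ (q * (N / q) + s)) := by
  have hN : q * (N / q) + N % q = N := Nat.div_add_mod N q
  have h1 : Esum q d a θ N = ∑ n ∈ Finset.range (q * (N / q) + N % q),
      zet d ^ (a * fI q θ n) := by rw [hN]; rfl
  rw [h1, sum_range_block]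
  congr 1
  rw [Tsum, Esum, Finset.sum_mul_sum]
  rw [Finset.sum_comm]
  refine Finset.sum_congr rfl fun m hm => Finset.sum_congr rfl fun s hs => ?_
  rw [fI_rec hq θ s m (Finset.mem_range.mp hm), ← zpow_add₀ (zet_ne_zero hd)]
  congr 1
  ring

lemma Esum_abs_step {q d : ℕ} (hq : 2 ≤ q) (hd : 2 ≤ d) (a θ : ℤ) (N : ℕ) :
    Complex.abs (Esum q d a θ N) ≤
      Complex.abs (Tsum q d (a * θ)) * Complex.abs (Esum q d a (1 + q * θ) (N / q)) + q := by
  rw [Esum_rec hq hd a θ N]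
  refine le_trans (AbsoluteValue.add_le _ _ _) ?_
  rw [map_mul]
  gcongr
  refine le_trans (AbsoluteValue.sum_le _ _ _) ?_
  have : ∀ s ∈ Finset.range (N % q), Complex.abs (zet d ^ (a * fI q θ (q * (N / q) + s))) ≤ 1 := by
    intro s _
    rw [zet_zpow_norm hd]
  refine le_trans (Finset.sum_le_sum this) ?_
  simp only [Finset.sum_const, Finset.card_range, nsmul_eq_mul, mul_one]
  exact_mod_cast Nat.le_of_lt (Nat.mod_lt N (by omega))


lemma pair_not_dvd {q d : ℕ} {a : ℤ} (ha : ¬ (d:ℤ) ∣ a) (θ : ℤ) :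
    ¬ (d:ℤ) ∣ (a * θ) ∨ ¬ (d:ℤ) ∣ (a * (1 + q * θ)) := by
  by_contra h
  push_neg at h
  exact ha (by
    have : a = a * (1 + q * θ) - q * (a * θ) := by ring
    rw [this]
    exact dvd_sub h.2 (Dvd.dvd.mul_left h.1 _))

lemma Esum_two_step {q d : ℕ} (hq : 2 ≤ q) (hd : 2 ≤ d) {a : ℤ} (ha : ¬ (d:ℤ) ∣ a)
    (θ : ℤ) (N : ℕ) :
    Complex.abs (Esum q d a θ N) ≤
      (q * ((q:ℝ) - eps d hd)) *
        Complex.abs (Esum q d a (1 + q * (1 + q * θ)) (N / q ^ 2)) + (q^2 + q) := by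
  have hqe : (0:ℝ) ≤ (q:ℝ) - eps d hd := by
    have := eps_le_two hd
    have : (2:ℝ) ≤ q := by exact_mod_cast hq
    linarith [eps_le_two hd]
  have h1 := Esum_abs_step hq hd a θ N
  have h2 := Esum_abs_step hq hd a (1 + q * θ) (N / q)
  have hdiv : N / q / q = N / q ^ 2 := by rw [Nat.div_div_eq_div_mul, pow_two]
  rw [hdiv] at h2
  have hT1 := Tsum_le hq hd (a * θ)
  have hT2 := Tsum_le hq hd (a * (1 + q * θ))
  have habs1 : (0:ℝ) ≤ Complex.abs (Esum q d a (1 + q * (1 + q * θ)) (N / q ^ 2)) :=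
    AbsoluteValue.nonneg _ _
  have habs0 : (0:ℝ) ≤ Complex.abs (Tsum q d (a * θ)) := AbsoluteValue.nonneg _ _
  have habs2 : (0:ℝ) ≤ Complex.abs (Esum q d a (1 + q * θ) (N / q)) := AbsoluteValue.nonneg _ _
  have hprod : Complex.abs (Tsum q d (a * θ)) * Complex.abs (Tsum q d (a * (1 + q * θ))) ≤
      q * ((q:ℝ) - eps d hd) := by
    rcases pair_not_dvd (q := q) ha θ with h | h
    · have := Tsum_lt hq hd h
      calc Complex.abs (Tsum q d (a * θ)) * Complex.abs (Tsum q d (a * (1 + q * θ)))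
          ≤ ((q:ℝ) - eps d hd) * q := by
            exact mul_le_mul this hT2 (AbsoluteValue.nonneg _ _) hqe
        _ = q * ((q:ℝ) - eps d hd) := by ring
    · have := Tsum_lt hq hd h
      exact mul_le_mul hT1 this (AbsoluteValue.nonneg _ _) (by positivity)
  have hq0 : (0:ℝ) ≤ (q:ℝ) := by positivity
  calc Complex.abs (Esum q d a θ N)
      ≤ Complex.abs (Tsum q d (a * θ)) * Complex.abs (Esum q d a (1 + q * θ) (N / q)) + q := h1
    _ ≤ Complex.abs (Tsum q d (a * θ)) *
        (Complex.abs (Tsum q d (a * (1 + q * θ))) *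
          Complex.abs (Esum q d a (1 + q * (1 + q * θ)) (N / q ^ 2)) + q) + q := by gcongr
    _ = (Complex.abs (Tsum q d (a * θ)) * Complex.abs (Tsum q d (a * (1 + q * θ)))) *
          Complex.abs (Esum q d a (1 + q * (1 + q * θ)) (N / q ^ 2))
          + Complex.abs (Tsum q d (a * θ)) * q + q := by ring
    _ ≤ (q * ((q:ℝ) - eps d hd)) *
          Complex.abs (Esum q d a (1 + q * (1 + q * θ)) (N / q ^ 2)) + q * q + q := by
        gcongr
    _ ≤ _ := by rw [pow_two]; linarith

lemma Esum_main_bound {q d : ℕ} (hq : 2 ≤ q) (hd : 2 ≤ d) {a : ℤ} (ha : ¬ (d:ℤ) ∣ a) :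
    ∀ (k : ℕ) (θ : ℤ) (N : ℕ), N < q ^ (2 * k) →
      Complex.abs (Esum q d a θ N) ≤
        ((q:ℝ)^2 + q) * k * (max ((q:ℝ) * ((q:ℝ) - eps d hd)) 1) ^ k := by
  set M := max ((q:ℝ) * ((q:ℝ) - eps d hd)) 1 with hM
  have hM1 : (1:ℝ) ≤ M := le_max_right _ _
  intro k
  induction k with
  | zero =>
    intro θ N hN
    have : N = 0 := by
      have := hN
      simp at this
      omega
    subst this
    simp [Esum]
  | succ k ih =>
    intro θ N hN
    have hNd : N / q ^ 2 < q ^ (2 * k) := by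
      rw [Nat.div_lt_iff_lt_mul (by positivity)]
      calc N < q ^ (2 * (k+1)) := hN
        _ = q ^ (2 * k) * q ^ 2 := by ring
    have h1 := Esum_two_step hq hd ha θ N
    have h2 := ih (1 + q * (1 + q * θ)) (N / q ^ 2) hNd
    have hMk : (0:ℝ) < M ^ k := by positivity
    have hle : (q:ℝ) * ((q:ℝ) - eps d hd) ≤ M := le_max_left _ _
    have hq2 : (0:ℝ) ≤ (q:ℝ)^2 + q := by positivity
    have habs : (0:ℝ) ≤ Complex.abs (Esum q d a (1 + q * (1 + q * θ)) (N / q ^ 2)) :=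
      AbsoluteValue.nonneg _ _
    have hnn : (0:ℝ) ≤ (q:ℝ) * ((q:ℝ) - eps d hd) := by
      have h2q : (2:ℝ) ≤ (q:ℝ) := by exact_mod_cast hq
      have := eps_le_two hd
      nlinarith
    have hstep : (q * ((q:ℝ) - eps d hd)) *
        Complex.abs (Esum q d a (1 + q * (1 + q * θ)) (N / q ^ 2)) ≤
        M * (((q:ℝ)^2 + q) * k * M ^ k) :=
      mul_le_mul hle h2 habs (le_trans zero_le_one hM1)
    have hMk1 : (1:ℝ) ≤ M ^ (k+1) := by
      calc (1:ℝ) = 1 ^ (k+1) := by simp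
        _ ≤ M ^ (k+1) := pow_le_pow_left₀ zero_le_one hM1 _
    push_cast
    calc Complex.abs (Esum q d a θ N)
        ≤ (q * ((q:ℝ) - eps d hd)) *
            Complex.abs (Esum q d a (1 + q * (1 + q * θ)) (N / q ^ 2)) + ((q:ℝ)^2 + q) := h1
      _ ≤ M * (((q:ℝ)^2 + q) * k * M ^ k) + ((q:ℝ)^2 + q) * M ^ (k+1) := by nlinarith
      _ = ((q:ℝ)^2 + q) * ((k:ℝ)+1) * M ^ (k+1) := by ring

lemma Esum_tendsto {q d : ℕ} (hq : 2 ≤ q) (hd : 2 ≤ d) {a : ℤ} (ha : ¬ (d:ℤ) ∣ a) (θ : ℤ) :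
    Tendsto (fun N : ℕ => Complex.abs (Esum q d a θ N) / N) atTop (𝓝 0) := by
  set M := max ((q:ℝ) * ((q:ℝ) - eps d hd)) 1 with hM
  set ρ := M / (q:ℝ)^2 with hρ
  set C := (((q:ℝ)^2 + q) * (q:ℝ)^2) with hC
  have hq0 : (0:ℝ) < (q:ℝ) := by positivity
  have hq2 : (2:ℝ) ≤ (q:ℝ) := by exact_mod_cast hq
  have hM0 : (0:ℝ) < M := lt_of_lt_of_le zero_lt_one (le_max_right _ _)
  have hMlt : M < (q:ℝ)^2 := by
    rw [hM, max_lt_iff]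
    constructor
    · nlinarith [eps_pos hd]
    · nlinarith
  have hρ0 : (0:ℝ) ≤ ρ := by positivity
  have hρ1 : ρ < 1 := by
    rw [hρ, div_lt_one (by positivity)]
    exact hMlt
  have houter : Tendsto (fun k : ℕ => C * ((k:ℝ) * ρ ^ k)) atTop (𝓝 0) := by
    have := (tendsto_self_mul_const_pow_of_lt_one hρ0 hρ1).const_mul C
    simpa using this
  have hkfun : Tendsto (fun N : ℕ => Nat.log q N / 2 + 1) atTop atTop := by
    apply tendsto_atTop.mpr
    intro b
    filter_upwards [eventually_ge_atTop (q ^ (2 * b))] with N hN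
    have hN0 : N ≠ 0 := by
      have : 1 ≤ q ^ (2*b) := Nat.one_le_pow _ _ (by omega)
      omega
    have : 2 * b ≤ Nat.log q N := (Nat.le_log_iff_pow_le (by omega) hN0).mpr hN
    omega
  have hg : Tendsto (fun N : ℕ => C * (((Nat.log q N / 2 + 1 : ℕ) : ℝ) *
      ρ ^ (Nat.log q N / 2 + 1))) atTop (𝓝 0) := houter.comp hkfun
  apply squeeze_zero (fun N => by positivity) _ hg
  intro N
  rcases Nat.eq_zero_or_pos N with rfl | hN
  · simp
    positivity
  set j := Nat.log q N / 2 with hj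
  have hk1 : N < q ^ (2 * (j + 1)) := by
    have h1 : N < q ^ (Nat.log q N + 1) := Nat.lt_pow_succ_log_self (by omega) N
    refine lt_of_lt_of_le h1 (Nat.pow_le_pow_right (by omega) ?_)
    omega
  have hk2 : q ^ (2 * j) ≤ N := by
    refine le_trans (Nat.pow_le_pow_right (by omega) ?_) (Nat.pow_log_le_self q (by omega))
    omega
  have hb := Esum_main_bound hq hd ha (j + 1) θ N hk1
  have hk2R : ((q:ℝ)) ^ (2 * j) ≤ (N:ℝ) := by exact_mod_cast hk2
  have hNpos : (0:ℝ) < (N:ℝ) := by exact_mod_cast hN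
  have hpow_pos : (0:ℝ) < ((q:ℝ)) ^ (2 * j) := by positivity
  calc Complex.abs (Esum q d a θ N) / N
      ≤ (((q:ℝ)^2 + q) * ((j:ℝ) + 1) * M ^ (j + 1)) / ((q:ℝ)) ^ (2 * j) := by
        apply div_le_div₀ (by positivity) _ hpow_pos hk2R
        refine le_of_le_of_eq hb ?_
        rw [hM]
        push_cast
        ring
    _ = C * ((((j:ℝ)) + 1) * ρ ^ (j + 1)) := by
        rw [hρ, div_pow, hC, pow_mul]
        field_simp
        ring
    _ = C * (((j + 1 : ℕ) : ℝ) * ρ ^ (j + 1)) := by push_cast; ring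

theorem stmt_11 (q d : ℕ) (hq : 2 ≤ q) (hd : 2 ≤ d) (θ : ℤ) (x : ℤ) :
    Tendsto
      (fun N : ℕ =>
        (((Finset.range N).filter fun n =>
            ((wq q n : ℤ) + θ * n) % (d : ℤ) = x % (d : ℤ)).card : ℝ) / N)
      atTop (nhds (1 / d)) := by
  have hd0 : (d:ℂ) ≠ 0 := Nat.cast_ne_zero.mpr (by omega)
  -- complex-valued count
  set g : ℕ → ℕ → ℂ := fun a N => zet d ^ (-((a:ℤ) * x)) * Esum q d a θ N with hg
  have hcount : ∀ N, ((((Finset.range N).filter fun n =>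
      ((wq q n : ℤ) + θ * n) % (d : ℤ) = x % (d : ℤ)).card : ℂ)) =
      (1/d) * ∑ a ∈ Finset.range d, g a N := by
    intro N
    rw [Finset.natCast_card_filter]
    have hterm : ∀ n : ℕ,
        (if ((wq q n : ℤ) + θ * n) % (d : ℤ) = x % (d : ℤ) then (1:ℂ) else 0) =
        (1/d) * ∑ a ∈ Finset.range d, zet d ^ ((a:ℤ) * (fI q θ n - x)) := by
      intro n
      rw [sum_char hd]
      have hiff : (((wq q n : ℤ) + θ * n) % (d : ℤ) = x % (d : ℤ)) ↔ (d:ℤ) ∣ (fI q θ n - x) := by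
        constructor
        · intro h
          exact dvd_sub_comm.mp (Int.ModEq.dvd h)
        · intro h
          exact Int.modEq_iff_dvd.mpr (dvd_sub_comm.mp h)
      by_cases hc : ((wq q n : ℤ) + θ * n) % (d : ℤ) = x % (d : ℤ)
      · rw [if_pos hc, if_pos (hiff.mp hc), one_div, inv_mul_cancel₀ hd0]
      · rw [if_neg hc, if_neg (fun hcontra => hc (hiff.mpr hcontra)), mul_zero]
    simp_rw [hterm]
    rw [← Finset.mul_sum, Finset.sum_comm]
    congr 1
    refine Finset.sum_congr rfl fun a _ => ?_
    simp only [hg, Esum, Finset.mul_sum]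
    refine Finset.sum_congr rfl fun n _ => ?_
    rw [← zpow_add₀ (zet_ne_zero hd)]
    congr 1
    ring
  have hrange : Finset.range d = insert 0 (Finset.Ico 1 d) := by
    ext n
    simp [Finset.mem_Ico, Finset.mem_range]
    omega
  have h0 : Tendsto (fun N : ℕ => g 0 N / N) atTop (𝓝 1) := by
    apply Tendsto.congr' (f₁ := fun _ : ℕ => (1:ℂ))
    · filter_upwards [eventually_ge_atTop 1] with N hN
      have hN0 : ((N:ℂ)) ≠ 0 := Nat.cast_ne_zero.mpr (by omega)
      have hE0 : Esum q d 0 θ N = N := by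
        rw [Esum]
        simp
      rw [hg]
      simp only [Nat.cast_zero, zero_mul, neg_zero, zpow_zero, one_mul, hE0]
      rw [div_self hN0]
    · exact tendsto_const_nhds
  have hrest : ∀ a ∈ Finset.Ico 1 d, Tendsto (fun N : ℕ => g a N / N) atTop (𝓝 0) := by
    intro a haa
    rw [Finset.mem_Ico] at haa
    have hadvd : ¬ (d:ℤ) ∣ ((a:ℕ):ℤ) := by
      intro hdvd
      have h1 : (d:ℤ) ≤ (a:ℤ) := Int.le_of_dvd (by exact_mod_cast haa.1) hdvd
      have : (a:ℤ) < (d:ℤ) := by exact_mod_cast haa.2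
      omega
    rw [tendsto_zero_iff_norm_tendsto_zero]
    apply Tendsto.congr' (f₁ := fun N : ℕ => Complex.abs (Esum q d a θ N) / N)
    · filter_upwards [eventually_ge_atTop 1] with N hN
      rw [hg]
      simp only [norm_div, Complex.norm_eq_abs, map_mul]
      rw [zet_zpow_norm hd, one_mul, Complex.abs_natCast]
    · exact Esum_tendsto hq hd hadvd θ
  have hsum : Tendsto (fun N : ℕ => ∑ a ∈ Finset.range d, g a N / N) atTop (𝓝 1) := by
    have hzero : (0:ℕ) ∉ Finset.Ico 1 d := by simp
    have := Tendsto.add h0 (tendsto_finset_sum (Finset.Ico 1 d) hrest)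
    simp only [Finset.sum_const_zero, add_zero] at this
    apply Tendsto.congr _ this
    intro N
    rw [hrange, Finset.sum_insert hzero]
  have hC : Tendsto (fun N : ℕ =>
      ((((Finset.range N).filter fun n =>
        ((wq q n : ℤ) + θ * n) % (d : ℤ) = x % (d : ℤ)).card : ℂ)) / N) atTop (𝓝 (1/d)) := by
    have := hsum.const_mul ((1:ℂ)/d)
    rw [mul_one] at this
    apply Tendsto.congr _ this
    intro N
    rw [hcount N, mul_div_assoc, Finset.sum_div, Finset.mul_sum]
  have hre := (Complex.continuous_re.tendsto (1/(d:ℂ))).comp hC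
  have hlim : (1/(d:ℂ)).re = 1/(d:ℝ) := by
    rw [show (1/(d:ℂ)) = (((1/(d:ℝ)):ℝ):ℂ) by push_cast; ring, Complex.ofReal_re]
  rw [hlim] at hre
  have hcast : ∀ (c N : ℕ), (((c:ℂ))/(N:ℂ)).re = (c:ℝ)/N := by
    intro c N
    rw [show ((c:ℂ))/(N:ℂ) = ((((c:ℝ)/(N:ℝ)):ℝ):ℂ) by push_cast; ring, Complex.ofReal_re]
  exact hre.congr fun N => hcast _ N
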